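/- Let s = (s₁,s₂,s₃) ∈ ℝ³ with s₁,s₂,s₃ > 0. Then the following are equivalent: (i) p_r(s) ≥ 0 for all r = 1,2,3; (ii) there exists a = (a₁,a₂,a₃) ∈ ℝ³ such that M₂₄(s,a) is positive semidefinite, s_{r+1} + s_{r+2} - s_r + 3S(s)/(2s_r) + 7a_r ≥ 0 for all r, and a_r ≤ a_r⁰(s) for all r. (This is the matrix-level statement that g_s on W²⁴ has strongly nonnegative curvature if and only if it has sec ≥ 0.) -/

import Mathlib

open Matrix

/-- `S(s) = 2(s₁s₂+s₁s₃+s₂s₃) - (s₁²+s₂²+s₃²)`. -/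
noncomputable def Spoly (s : Fin 3 → ℝ) : ℝ :=
  2 * (s 0 * s 1 + s 0 * s 2 + s 1 * s 2) - (s 0 ^ 2 + s 1 ^ 2 + s 2 ^ 2)

/-- `p_r(s) = (s_{r+1}-s_{r+2})² + 2 s_r (s_{r+1}+s_{r+2}) - 3 s_r²`, indices mod 3. -/
noncomputable def ppoly (s : Fin 3 → ℝ) (r : Fin 3) : ℝ :=
  (s (r + 1) - s (r + 2)) ^ 2 + 2 * s r * (s (r + 1) + s (r + 2)) - 3 * s r ^ 2

/-- `a_r⁰(s) = ((s_{r+1}-s_{r+2})² - s_r²)/(2 s_r)`, indices mod 3. -/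
noncomputable def a0 (s : Fin 3 → ℝ) (r : Fin 3) : ℝ :=
  ((s (r + 1) - s (r + 2)) ^ 2 - s r ^ 2) / (2 * s r)

/-- First block of the modified curvature operator of `(W²⁴, g_s)`. -/
noncomputable def M24 (s a : Fin 3 → ℝ) : Matrix (Fin 3) (Fin 3) ℝ :=
  !![4 * s 0,                   Spoly s / s 2 - 2 * a 2,  Spoly s / s 1 - 2 * a 1;
     Spoly s / s 2 - 2 * a 2,   4 * s 1,                  Spoly s / s 0 - 2 * a 0;
     Spoly s / s 1 - 2 * a 1,   Spoly s / s 0 - 2 * a 0,  4 * s 2]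

lemma Spoly_eq_sum (s : Fin 3 → ℝ) : Spoly s = ppoly s 0 + ppoly s 1 + ppoly s 2 := by
  simp [ppoly, Spoly]
  ring

lemma lin_eq (s : Fin 3 → ℝ) (hs : ∀ r, 0 < s r) (r : Fin 3) :
    s (r + 1) + s (r + 2) - s r + 3 * Spoly s / (2 * s r) + 7 * a0 s r
      = 2 * ppoly s r / s r := by
  have h0 := (hs 0).ne'
  have h1 := (hs 1).ne'
  have h2 := (hs 2).ne'
  fin_cases r <;>
  · simp [a0, Spoly, ppoly]
    field_simp
    ring

lemma quad_nonneg (s : Fin 3 → ℝ) (hs : ∀ r, 0 < s r) (hS : 0 ≤ Spoly s)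
    (x : Fin 3 → ℝ) : 0 ≤ dotProduct (star x) ((M24 s (a0 s)) *ᵥ x) := by
  have h0 := hs 0
  have h1 := hs 1
  have h2 := hs 2
  have key : dotProduct (star x) ((M24 s (a0 s)) *ᵥ x) =
      ((4 * s 0 * s 1 * s 2 * x 0
          + 2 * (s 2 * (s 0 + s 1) - (s 0 - s 1) ^ 2) * s 1 * x 1
          + 2 * (s 1 * (s 0 + s 2) - (s 0 - s 2) ^ 2) * s 2 * x 2) ^ 2
        + 4 * Spoly s * (s 1 * (s 0 - s 1) * x 1 + s 2 * (s 0 - s 2) * x 2) ^ 2)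
        / (4 * s 0 * s 1 ^ 2 * s 2 ^ 2) := by
    simp [M24, a0, Spoly, Matrix.mulVec, dotProduct, Fin.sum_univ_three]
    field_simp
    ring
  rw [key]
  apply div_nonneg
  · have := sq_nonneg (4 * s 0 * s 1 * s 2 * x 0
          + 2 * (s 2 * (s 0 + s 1) - (s 0 - s 1) ^ 2) * s 1 * x 1
          + 2 * (s 1 * (s 0 + s 2) - (s 0 - s 2) ^ 2) * s 2 * x 2)
    have h4 := mul_nonneg (mul_nonneg (by norm_num : (0:ℝ) ≤ 4) hS)
      (sq_nonneg (s 1 * (s 0 - s 1) * x 1 + s 2 * (s 0 - s 2) * x 2))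
    nlinarith
  · positivity

lemma M24_herm (s : Fin 3 → ℝ) (a : Fin 3 → ℝ) : (M24 s a).IsHermitian := by
  unfold Matrix.IsHermitian
  ext i j
  fin_cases i <;> fin_cases j <;> simp [M24, Matrix.conjTranspose_apply]

/-- Matrix-level statement: `g_s` on `W²⁴` has strongly nonnegative curvature iff it
has `sec ≥ 0`. -/
theorem stronglyNonneg_W24_iff (s : Fin 3 → ℝ) (hs : ∀ r, 0 < s r) :
    (∀ r, 0 ≤ ppoly s r) ↔
      ∃ a : Fin 3 → ℝ, (M24 s a).PosSemidef ∧
        (∀ r, 0 ≤ s (r + 1) + s (r + 2) - s r + 3 * Spoly s / (2 * s r) + 7 * a r) ∧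
        (∀ r, a r ≤ a0 s r) := by
  constructor
  · intro hp
    have hS : 0 ≤ Spoly s := by
      rw [Spoly_eq_sum]
      have := hp 0; have := hp 1; have := hp 2; linarith
    refine ⟨a0 s, Matrix.posSemidef_iff_dotProduct_mulVec.mpr ⟨M24_herm s (a0 s), quad_nonneg s hs hS⟩, ?_, fun r => le_rfl⟩
    intro r
    rw [lin_eq s hs r]
    have := hp r
    have := hs r
    positivity
  · rintro ⟨a, _, h2, h3⟩ r
    have h4 : 0 ≤ s (r + 1) + s (r + 2) - s r + 3 * Spoly s / (2 * s r) + 7 * a0 s r := by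
      have := h2 r
      have := h3 r
      linarith
    rw [lin_eq s hs r] at h4
    have h5 := (le_div_iff₀ (hs r)).mp h4
    linarith
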